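/- Let f : ℝ^n → ℝ be convex and L-smooth and r : ℝ^n → (−∞,∞] proper closed convex, with F = f + r. Suppose x_{k+1} = x_k + ηd_k where d_k = −g_k − h_{k+1}, h_{k+1} ∈ ∂r(x_{k+1}), and g_k ∈ ℝ^n arbitrary. Then F(x_{k+1}) − F(x_k) ≤ η‖∇f(x_k) − g_k‖·‖d_k‖ + η(ηL/2 − 1)‖d_k‖². -/

import Mathlib

open scoped RealInnerProductSpace

lemma descent_aux {n : ℕ} (f : EuclideanSpace ℝ (Fin n) → ℝ)
    (hdiff : Differentiable ℝ f) (L : ℝ) (hL : 0 ≤ L)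
    (hLip : ∀ x y, ‖gradient f x - gradient f y‖ ≤ L * ‖x - y‖)
    (x y : EuclideanSpace ℝ (Fin n)) :
    f y ≤ f x + ⟪gradient f x, y - x⟫ + L / 2 * ‖y - x‖ ^ 2 := by
  set v := y - x with hv
  have hgradcont : Continuous (gradient f) := by
    have : LipschitzWith (Real.toNNReal L) (gradient f) := by
      apply LipschitzWith.of_dist_le_mul
      intro a b
      rw [dist_eq_norm, Real.coe_toNNReal _ hL]
      exact hLip a b
    exact this.continuous
  have key : ∀ t : ℝ, HasDerivAt (fun s : ℝ => f (x + s • v))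
      (⟪gradient f (x + t • v), v⟫) t := by
    intro t
    have hc : HasDerivAt (fun s : ℝ => x + s • v) v t := by
      simpa using ((hasDerivAt_id t).smul_const v).const_add x
    have hf := (hdiff (x + t • v)).hasGradientAt.hasFDerivAt
    have := hf.comp_hasDerivAt t hc
    rw [InnerProductSpace.toDual_apply_apply] at this; exact this
  have hcont : Continuous (fun t : ℝ => ⟪gradient f (x + t • v), v⟫) := by
    exact (hgradcont.comp (by continuity)).inner continuous_const
  have hint : ∫ t in (0:ℝ)..1, ⟪gradient f (x + t • v), v⟫ = f y - f x := by
    rw [intervalIntegral.integral_eq_sub_of_hasDerivAt (fun t _ => key t)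
      (hcont.intervalIntegrable 0 1)]
    simp [hv]
  have hbound : ∫ t in (0:ℝ)..1, (⟪gradient f (x + t • v), v⟫ - ⟪gradient f x, v⟫)
      ≤ ∫ t in (0:ℝ)..1, L * t * ‖v‖ ^ 2 := by
    apply intervalIntegral.integral_mono_on zero_le_one
    · exact ((hcont.sub continuous_const).intervalIntegrable 0 1)
    · exact (Continuous.intervalIntegrable (by continuity) 0 1)
    · intro t ht
      have h1 : ⟪gradient f (x + t • v) - gradient f x, v⟫
          ≤ ‖gradient f (x + t • v) - gradient f x‖ * ‖v‖ := real_inner_le_norm _ _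
      have h2 : ‖gradient f (x + t • v) - gradient f x‖ ≤ L * (t * ‖v‖) := by
        have := hLip (x + t • v) x
        simpa [norm_smul, abs_of_nonneg ht.1, mul_assoc] using this
      have h3 : ‖gradient f (x + t • v) - gradient f x‖ * ‖v‖ ≤ L * t * ‖v‖ ^ 2 := by
        calc ‖gradient f (x + t • v) - gradient f x‖ * ‖v‖
            ≤ (L * (t * ‖v‖)) * ‖v‖ := by
              exact mul_le_mul_of_nonneg_right h2 (norm_nonneg _)
          _ = L * t * ‖v‖ ^ 2 := by ring
      rw [inner_sub_left] at h1
      exact h1.trans h3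
  have hval : ∫ t in (0:ℝ)..1, L * t * ‖v‖ ^ 2 = L / 2 * ‖v‖ ^ 2 := by
    have : ∫ t in (0:ℝ)..1, L * t * ‖v‖ ^ 2
        = (L * ‖v‖ ^ 2) * ∫ t in (0:ℝ)..1, t := by
      rw [← intervalIntegral.integral_const_mul]
      congr 1; ext t; ring
    rw [this, integral_id]; ring
  have hsplit : ∫ t in (0:ℝ)..1, (⟪gradient f (x + t • v), v⟫ - ⟪gradient f x, v⟫)
      = (f y - f x) - ⟪gradient f x, v⟫ := by
    rw [intervalIntegral.integral_sub (hcont.intervalIntegrable 0 1)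
      (intervalIntegrable_const), hint]
    simp
  rw [hsplit, hval] at hbound
  linarith
theorem stmt19 {n : ℕ} (f : EuclideanSpace ℝ (Fin n) → ℝ)
    (hconv : ConvexOn ℝ Set.univ f) (hdiff : Differentiable ℝ f)
    (L : ℝ) (hL : 0 ≤ L)
    (hLip : ∀ x y, ‖gradient f x - gradient f y‖ ≤ L * ‖x - y‖)
    (r : EuclideanSpace ℝ (Fin n) → ℝ) (hr : ConvexOn ℝ Set.univ r)
    (η : ℝ) (hη : 0 < η)
    (xk xk1 g h d : EuclideanSpace ℝ (Fin n))
    (hsub : ∀ y, r xk1 + ⟪h, y - xk1⟫ ≤ r y)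
    (hdk : d = -g - h) (hx : xk1 = xk + η • d) :
    f xk1 + r xk1 - (f xk + r xk)
      ≤ η * ‖gradient f xk - g‖ * ‖d‖ + η * (η * L / 2 - 1) * ‖d‖ ^ 2 := by
  have hdiffx : xk1 - xk = η • d := by rw [hx]; abel
  have hf1 := descent_aux f hdiff L hL hLip xk xk1
  rw [hdiffx] at hf1
  have hf1' : f xk1 ≤ f xk + η * ⟪gradient f xk, d⟫ + L / 2 * (η ^ 2 * ‖d‖ ^ 2) := by
    have e1 : ⟪gradient f xk, η • d⟫ = η * ⟪gradient f xk, d⟫ := real_inner_smul_right _ _ _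
    have e2 : ‖η • d‖ ^ 2 = η ^ 2 * ‖d‖ ^ 2 := by
      rw [norm_smul]; rw [Real.norm_eq_abs, mul_pow, sq_abs]
    rw [e1, e2] at hf1; linarith
  have hr1 := hsub xk
  have e3 : ⟪h, xk - xk1⟫ = -(η * ⟪h, d⟫) := by
    have : xk - xk1 = -(η • d) := by rw [hx]; abel
    rw [this, inner_neg_right, real_inner_smul_right]
  rw [e3] at hr1
  have hh : h = -g - d := by rw [hdk]; abel
  have e4 : ⟪h, d⟫ = -⟪g, d⟫ - ‖d‖ ^ 2 := by
    rw [hh, sub_eq_add_neg, inner_add_left, inner_neg_left, inner_neg_left,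
      real_inner_self_eq_norm_sq]; ring
  rw [e4] at hr1
  have hcs : ⟪gradient f xk, d⟫ - ⟪g, d⟫ ≤ ‖gradient f xk - g‖ * ‖d‖ := by
    have := real_inner_le_norm (gradient f xk - g) d
    rwa [inner_sub_left] at this
  nlinarith [hη.le, mul_le_mul_of_nonneg_left hcs hη.le]
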